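/- arXiv:2102.01752 — 4 statements merged into one kernel-verified Lean document; each statement's English description precedes it below -/
import Mathlib

section
/- Corollary to Theorem 1 (non-positive congruence mismatch). Under the hypotheses of Theorem 1 (optimal congruent potentials {ψₙ*}; B-smooth differentiable convex ψₙ with differentiable (1/B)-strongly convex conjugates ψ̄ₙ satisfying ∇ψ̄ₙ(∇ψₙ(x)) = x for all x; Δ = Σₙ αₙ ∫ ψₙ dPₙ − Σₙ αₙ ∫ ψₙ* dPₙ), assume additionally that the congruence mismatch is non-positive: ∫ (Σₙ αₙ ψ̄ₙ(y) − ‖y‖²/2) dP̄(y) ≤ 0. Then Δ ≥ (1/(2B)) Σₙ αₙ ∫ ‖∇ψₙ*(x) − ∇ψₙ(x)‖² dPₙ(x), and consequently for every n ∈ {1,…,N}, ∫ ‖∇ψₙ*(x) − ∇ψₙ(x)‖² dPₙ(x) ≤ 2BΔ/αₙ. -/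
open MeasureTheory RealInnerProductSpace

section Aux
variable {E : Type*} [NormedAddCommGroup E] [InnerProductSpace ℝ E] [CompleteSpace E]

/-- strong-convexity lower bound via the convexity of `f - c‖·‖²`. -/
lemma aux_strong_conv_ineq {f : E → ℝ} {c : ℝ}
    (hf : ConvexOn ℝ Set.univ (fun y => f y - c * ‖y‖ ^ 2)) (hd : Differentiable ℝ f)
    (z y : E) :
    f z + ⟪gradient f z, y - z⟫ + c * ‖y - z‖ ^ 2 ≤ f y := by
  set w := y - z with hw
  have hzw : z + w = y := by rw [hw]; abel
  -- convexity of the composition with the line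
  have hline : (fun t : ℝ => (f (z + t • w) - c * ‖z + t • w‖ ^ 2)) =
      (fun y => f y - c * ‖y‖ ^ 2) ∘ (AffineMap.lineMap z y : ℝ →ᵃ[ℝ] E) := by
    funext t
    simp only [Function.comp, AffineMap.lineMap_apply, hw, vsub_eq_sub, vadd_eq_add]
    rw [add_comm]
  have hg : ConvexOn ℝ Set.univ (fun t : ℝ => f (z + t • w) - c * ‖z + t • w‖ ^ 2) := by
    rw [hline]
    have := hf.comp_affineMap (AffineMap.lineMap z y : ℝ →ᵃ[ℝ] E)
    simpa using this
  -- derivative at 0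
  have hcurve : HasDerivAt (fun t : ℝ => z + t • w) w 0 := by
    simpa using ((hasDerivAt_id (0:ℝ)).smul_const w).const_add z
  have hfd : HasFDerivAt f (InnerProductSpace.toDual ℝ E (gradient f z)) z :=
    (hd z).hasGradientAt.hasFDerivAt
  have h2 : HasDerivAt (fun t : ℝ => f (z + t • w)) ⟪gradient f z, w⟫ 0 := by
    have hfd' : HasFDerivAt f (InnerProductSpace.toDual ℝ E (gradient f z)) (z + (0:ℝ) • w) := by
      simpa using hfd
    have := hfd'.comp_hasDerivAt (x := (0:ℝ)) hcurve
    simpa [InnerProductSpace.toDual_apply_apply, Function.comp_def] using this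
  have hnorm : (fun t : ℝ => ‖z + t • w‖ ^ 2) =
      fun t => ‖z‖ ^ 2 + 2 * (t * ⟪z, w⟫) + t ^ 2 * ‖w‖ ^ 2 := by
    funext t
    rw [norm_add_sq_real]
    simp [inner_smul_right, norm_smul, mul_pow, sq_abs]
    try ring
  have h3 : HasDerivAt (fun t : ℝ => ‖z + t • w‖ ^ 2) (2 * ⟪z, w⟫) 0 := by
    rw [hnorm]
    have := ((((hasDerivAt_id (0:ℝ)).mul_const ⟪z, w⟫).const_mul 2).const_add (‖z‖ ^ 2)).add
      ((hasDerivAt_pow 2 (0:ℝ)).mul_const (‖w‖ ^ 2))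
    simpa [Pi.add_def] using this
  have hg' : HasDerivAt (fun t : ℝ => f (z + t • w) - c * ‖z + t • w‖ ^ 2)
      (⟪gradient f z, w⟫ - c * (2 * ⟪z, w⟫)) 0 := h2.sub (h3.const_mul c)
  have hs := hg.le_slope_of_hasDerivAt (Set.mem_univ 0) (Set.mem_univ 1) one_pos hg'
  have hslope : slope (fun t : ℝ => f (z + t • w) - c * ‖z + t • w‖ ^ 2) 0 1
      = (f y - c * ‖y‖ ^ 2) - (f z - c * ‖z‖ ^ 2) := by
    rw [slope_def_field]
    simp [hzw]
  rw [hslope] at hs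
  have hexp : ‖y‖ ^ 2 = ‖z‖ ^ 2 + 2 * ⟪z, w⟫ + ‖w‖ ^ 2 := by
    rw [← hzw, norm_add_sq_real]
  have hexp' : c * ‖y‖ ^ 2 = c * ‖z‖ ^ 2 + 2 * c * ⟪z, w⟫ + c * ‖w‖ ^ 2 := by
    rw [hexp]; ring
  linarith [hs, hexp']

/-- gradient inequality for convex differentiable functions. -/
lemma aux_grad_ineq {f : E → ℝ} (hf : ConvexOn ℝ Set.univ f) (hd : Differentiable ℝ f)
    (z y : E) : f z + ⟪gradient f z, y - z⟫ ≤ f y := by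
  have := aux_strong_conv_ineq (f := f) (c := 0) (by simpa using hf) hd z y
  simpa using this

/-- Fenchel–Young equality at a gradient point. -/
lemma aux_fenchel_eq {f fb : E → ℝ} (hf : ConvexOn ℝ Set.univ f) (hd : Differentiable ℝ f)
    (hconj : ∀ y, IsLUB (Set.range fun x => ⟪x, y⟫ - f x) (fb y)) (x : E) :
    fb (gradient f x) = ⟪x, gradient f x⟫ - f x := by
  refine le_antisymm ((hconj _).2 ?_) ((hconj _).1 ⟨x, rfl⟩)
  rintro v ⟨x', rfl⟩
  have h := aux_grad_ineq hf hd x x'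
  have hin : ⟪gradient f x, x' - x⟫ = ⟪x', gradient f x⟫ - ⟪x, gradient f x⟫ := by
    rw [inner_sub_right, real_inner_comm x' _, real_inner_comm x _]
  have hgoal : ⟪x', gradient f x⟫ - f x' ≤ ⟪x, gradient f x⟫ - f x := by linarith
  exact hgoal

end Aux

/-- Corollary to Theorem 1 (non-positive congruence mismatch). Under the
hypotheses of Theorem 1, if the congruence mismatch
`∫ (Σₙ αₙ ψ̄ₙ(y) − ‖y‖²/2) dP̄` is non-positive, then
`Δ ≥ (1/(2B)) Σₙ αₙ ∫ ‖∇ψₙ* − ∇ψₙ‖² dPₙ` and, for every `n`,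
`∫ ‖∇ψₙ* − ∇ψₙ‖² dPₙ ≤ 2BΔ/αₙ`. -/
theorem barycenter_nonpositive_mismatch_corollary {D N : ℕ}
    (P : Fin N → Measure (EuclideanSpace ℝ (Fin D)))
    (Pbar : Measure (EuclideanSpace ℝ (Fin D)))
    [∀ n, IsProbabilityMeasure (P n)] [IsProbabilityMeasure Pbar]
    (α : Fin N → ℝ) (hα : ∀ n, 0 < α n) (hαsum : ∑ n, α n = 1)
    -- optimal congruent potentials ψₙ* with conjugates ψ̄ₙ*
    (ψs ψbs : Fin N → EuclideanSpace ℝ (Fin D) → ℝ)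
    (hψs_conv : ∀ n, ConvexOn ℝ Set.univ (ψs n))
    (hψs_diff : ∀ n, Differentiable ℝ (ψs n))
    (hψbs_diff : ∀ n, Differentiable ℝ (ψbs n))
    (hψbs_conj : ∀ n y, IsLUB (Set.range fun x => ⟪x, y⟫ - ψs n x) (ψbs n y))
    (hpush : ∀ n, (P n).map (gradient (ψs n)) = Pbar)
    (hsinv : ∀ n x, gradient (ψbs n) (gradient (ψs n) x) = x)
    (hcong : ∀ y, ∑ n, α n * ψbs n y = ‖y‖ ^ 2 / 2)
    (hcongGrad : ∀ y, ∑ n, α n • gradient (ψbs n) y = y)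
    -- candidate potentials ψₙ with conjugates ψ̄ₙ
    (B : ℝ) (hB : 0 < B)
    (ψ ψb : Fin N → EuclideanSpace ℝ (Fin D) → ℝ)
    (hψ_conv : ∀ n, ConvexOn ℝ Set.univ (ψ n))
    (hψ_diff : ∀ n, Differentiable ℝ (ψ n))
    (hψ_smooth : ∀ n x y, ‖gradient (ψ n) x - gradient (ψ n) y‖ ≤ B * ‖x - y‖)
    (hψb_diff : ∀ n, Differentiable ℝ (ψb n))
    (hψb_conj : ∀ n y, IsLUB (Set.range fun x => ⟪x, y⟫ - ψ n x) (ψb n y))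
    (hψb_sconv : ∀ n, ConvexOn ℝ Set.univ (fun y => ψb n y - (1 / B) / 2 * ‖y‖ ^ 2))
    (hψb_inv : ∀ n x, gradient (ψb n) (gradient (ψ n) x) = x)
    -- integrability of the stated integrals
    (hint1 : ∀ n, Integrable (ψ n) (P n))
    (hint2 : ∀ n, Integrable (ψs n) (P n))
    (hint3 : Integrable (fun y => ∑ n, α n * ψb n y - ‖y‖ ^ 2 / 2) Pbar)
    (hint4 : ∀ n, Integrable (fun x => ‖gradient (ψs n) x - gradient (ψ n) x‖ ^ 2) (P n))
    -- the difference of multiple correlations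
    (Δ : ℝ)
    (hΔ : Δ = (∑ n, α n * ∫ x, ψ n x ∂(P n)) - ∑ n, α n * ∫ x, ψs n x ∂(P n))
    -- non-positive congruence mismatch
    (hmismatch : ∫ y, (∑ n, α n * ψb n y - ‖y‖ ^ 2 / 2) ∂Pbar ≤ 0) :
    Δ ≥ (1 / (2 * B)) * ∑ n, α n * ∫ x, ‖gradient (ψs n) x - gradient (ψ n) x‖ ^ 2 ∂(P n) ∧
    ∀ n, ∫ x, ‖gradient (ψs n) x - gradient (ψ n) x‖ ^ 2 ∂(P n) ≤ 2 * B * Δ / α n := by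
  classical
  set c : ℝ := (1 / B) / 2 with hc
  have hcpos : 0 < c := by positivity
  set g : Fin N → EuclideanSpace ℝ (Fin D) → ℝ := fun n y => ψbs n y - ψb n y with hg
  -- pointwise key inequality
  have key : ∀ n x, g n (gradient (ψs n) x) + c * ‖gradient (ψs n) x - gradient (ψ n) x‖ ^ 2
      ≤ ψ n x - ψs n x := by
    intro n x
    have e1 : ψbs n (gradient (ψs n) x) = ⟪x, gradient (ψs n) x⟫ - ψs n x :=
      aux_fenchel_eq (hψs_conv n) (hψs_diff n) (hψbs_conj n) x
    have e2 : ψb n (gradient (ψ n) x) = ⟪x, gradient (ψ n) x⟫ - ψ n x :=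
      aux_fenchel_eq (hψ_conv n) (hψ_diff n) (hψb_conj n) x
    have e3 := aux_strong_conv_ineq (f := ψb n) (c := c) (hψb_sconv n) (hψb_diff n)
      (gradient (ψ n) x) (gradient (ψs n) x)
    rw [hψb_inv n x] at e3
    have e4 : ⟪x, gradient (ψs n) x - gradient (ψ n) x⟫
        = ⟪x, gradient (ψs n) x⟫ - ⟪x, gradient (ψ n) x⟫ := inner_sub_right x _ _
    simp only [hg]
    linarith
  -- a.e.-measurability of the pushforward maps
  have hTae : ∀ n, AEMeasurable (gradient (ψs n)) (P n) := by
    intro n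
    by_contra h
    have hp := hpush n
    rw [Measure.map_of_not_aemeasurable h] at hp
    exact (IsProbabilityMeasure.ne_zero Pbar) hp.symm
  have hgcont : ∀ n, Continuous (g n) :=
    fun n => ((hψbs_diff n).continuous).sub ((hψb_diff n).continuous)
  have hInt_h : ∀ n, Integrable
      (fun x => ψ n x - ψs n x - c * ‖gradient (ψs n) x - gradient (ψ n) x‖ ^ 2) (P n) :=
    fun n => ((hint1 n).sub (hint2 n)).sub ((hint4 n).const_mul c)
  -- positive parts of g n are integrable w.r.t. Pbar
  have hgpos_int : ∀ n, Integrable (fun y => max (g n y) 0) Pbar := by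
    intro n
    rw [← hpush n,
      integrable_map_measure (((hgcont n).max continuous_const).aestronglyMeasurable) (hTae n)]
    refine Integrable.mono (hInt_h n).abs
      ((((hgcont n).max continuous_const).measurable.comp_aemeasurable (hTae n)).aestronglyMeasurable) ?_
    filter_upwards with x
    have h1 := key n x
    have hsq : 0 ≤ c * ‖gradient (ψs n) x - gradient (ψ n) x‖ ^ 2 := by positivity
    simp only [Function.comp, Real.norm_eq_abs]
    rw [abs_abs, abs_le]
    constructor
    · have : -(|ψ n x - ψs n x - c * ‖gradient (ψs n) x - gradient (ψ n) x‖ ^ 2|) ≤ 0 := by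
        simp [abs_nonneg]
      exact this.trans (le_max_right _ _)
    · have h2 : g n (gradient (ψs n) x)
          ≤ ψ n x - ψs n x - c * ‖gradient (ψs n) x - gradient (ψ n) x‖ ^ 2 := by linarith
      have h3 : (0:ℝ) ≤ |ψ n x - ψs n x - c * ‖gradient (ψs n) x - gradient (ψ n) x‖ ^ 2| :=
        abs_nonneg _
      exact max_le (h2.trans (le_abs_self _)) h3
  -- ∑ α g = - mismatch integrand
  have hSeq : (fun y => ∑ m, α m * g m y)
      = fun y => -(∑ m, α m * ψb m y - ‖y‖ ^ 2 / 2) := by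
    funext y
    simp only [hg, mul_sub]
    rw [Finset.sum_sub_distrib, hcong y]
    ring
  have hS : Integrable (fun y => ∑ m, α m * g m y) Pbar := by
    rw [hSeq]; exact hint3.neg
  -- each g n is integrable w.r.t. Pbar
  have hg_int : ∀ n, Integrable (g n) Pbar := by
    intro n
    have hlow : Integrable
        (fun y => (∑ m, α m * g m y) - ∑ m ∈ Finset.univ.erase n, α m * max (g m y) 0) Pbar :=
      hS.sub (integrable_finset_sum _ (fun m _ => (hgpos_int m).const_mul (α m)))
    have hup : Integrable (fun y => α n * max (g n y) 0) Pbar := (hgpos_int n).const_mul (α n)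
    have hmain : Integrable (fun y => α n * g n y) Pbar := by
      refine Integrable.mono' (hlow.abs.add hup.abs)
        ((continuous_const.mul (hgcont n)).aestronglyMeasurable) ?_
      filter_upwards with y
      simp only [Pi.add_apply]
      have hsplit : α n * g n y
          = (∑ m, α m * g m y) - ∑ m ∈ Finset.univ.erase n, α m * g m y := by
        rw [← Finset.add_sum_erase Finset.univ (fun m => α m * g m y) (Finset.mem_univ n)]
        ring
      have hle : ∑ m ∈ Finset.univ.erase n, α m * g m y
          ≤ ∑ m ∈ Finset.univ.erase n, α m * max (g m y) 0 :=
        Finset.sum_le_sum fun m _ => mul_le_mul_of_nonneg_left (le_max_left _ _) (hα m).le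
      have hub : α n * g n y ≤ α n * max (g n y) 0 :=
        mul_le_mul_of_nonneg_left (le_max_left _ _) (hα n).le
      have hlb : (∑ m, α m * g m y) - ∑ m ∈ Finset.univ.erase n, α m * max (g m y) 0
          ≤ α n * g n y := by rw [hsplit]; linarith
      rw [Real.norm_eq_abs, abs_le]
      constructor
      · have := neg_abs_le ((∑ m, α m * g m y)
          - ∑ m ∈ Finset.univ.erase n, α m * max (g m y) 0)
        have h0 := abs_nonneg (α n * max (g n y) 0)
        linarith
      · have := le_abs_self (α n * max (g n y) 0)
        have h0 := abs_nonneg ((∑ m, α m * g m y)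
          - ∑ m ∈ Finset.univ.erase n, α m * max (g m y) 0)
        linarith
    have h2 := hmain.const_mul (α n)⁻¹
    have heq : (fun y => (α n)⁻¹ * (α n * g n y)) = g n := by
      funext y
      rw [← mul_assoc, inv_mul_cancel₀ (hα n).ne', one_mul]
    rwa [heq] at h2
  -- transfer along the pushforward
  have hgT_int : ∀ n, Integrable (fun x => g n (gradient (ψs n) x)) (P n) := by
    intro n
    have := (integrable_map_measure ((hgcont n).aestronglyMeasurable) (hTae n)).mp
      (by rw [hpush n]; exact hg_int n)
    simpa [Function.comp_def] using this
  have hgT_eq : ∀ n, ∫ x, g n (gradient (ψs n) x) ∂(P n) = ∫ y, g n y ∂Pbar := by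
    intro n
    rw [← hpush n, integral_map (hTae n) ((hgcont n).aestronglyMeasurable)]
  -- per-n integral inequality
  have hIneq : ∀ n, (∫ y, g n y ∂Pbar)
      + c * ∫ x, ‖gradient (ψs n) x - gradient (ψ n) x‖ ^ 2 ∂(P n)
      ≤ ∫ x, (ψ n x - ψs n x) ∂(P n) := by
    intro n
    have h1 : ∫ x, (g n (gradient (ψs n) x)
        + c * ‖gradient (ψs n) x - gradient (ψ n) x‖ ^ 2) ∂(P n)
        ≤ ∫ x, (ψ n x - ψs n x) ∂(P n) :=
      integral_mono ((hgT_int n).add ((hint4 n).const_mul c)) ((hint1 n).sub (hint2 n)) (key n)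
    rwa [integral_add (hgT_int n) ((hint4 n).const_mul c), integral_const_mul,
      hgT_eq n] at h1
  -- the sum of the g-integrals is nonnegative
  have hsum_g : 0 ≤ ∑ n, α n * ∫ y, g n y ∂Pbar := by
    have h1 : ∑ n, α n * ∫ y, g n y ∂Pbar = ∫ y, (∑ n, α n * g n y) ∂Pbar := by
      rw [integral_finset_sum _ (fun n _ => (hg_int n).const_mul (α n))]
      exact Finset.sum_congr rfl fun n _ => (integral_const_mul _ _).symm
    have h2 : ∫ y, (∑ n, α n * g n y) ∂Pbar
        = - ∫ y, (∑ m, α m * ψb m y - ‖y‖ ^ 2 / 2) ∂Pbar := by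
      rw [hSeq, integral_neg]
    rw [h1, h2]
    linarith
  -- main bound
  have hmain : Δ ≥ c * ∑ n, α n * ∫ x, ‖gradient (ψs n) x - gradient (ψ n) x‖ ^ 2 ∂(P n) := by
    have hΔeq : Δ = ∑ n, α n * ∫ x, (ψ n x - ψs n x) ∂(P n) := by
      rw [hΔ, ← Finset.sum_sub_distrib]
      exact Finset.sum_congr rfl fun n _ => by
        rw [integral_sub (hint1 n) (hint2 n)]; ring
    have hsum_le : ∑ n, α n * ((∫ y, g n y ∂Pbar)
        + c * ∫ x, ‖gradient (ψs n) x - gradient (ψ n) x‖ ^ 2 ∂(P n))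
        ≤ ∑ n, α n * ∫ x, (ψ n x - ψs n x) ∂(P n) :=
      Finset.sum_le_sum fun n _ => mul_le_mul_of_nonneg_left (hIneq n) (hα n).le
    have hexp : ∑ n, α n * ((∫ y, g n y ∂Pbar)
        + c * ∫ x, ‖gradient (ψs n) x - gradient (ψ n) x‖ ^ 2 ∂(P n))
        = (∑ n, α n * ∫ y, g n y ∂Pbar)
          + c * ∑ n, α n * ∫ x, ‖gradient (ψs n) x - gradient (ψ n) x‖ ^ 2 ∂(P n) := by
      rw [Finset.mul_sum, ← Finset.sum_add_distrib]
      exact Finset.sum_congr rfl fun n _ => by ring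
    rw [hΔeq]
    calc c * ∑ n, α n * ∫ x, ‖gradient (ψs n) x - gradient (ψ n) x‖ ^ 2 ∂(P n)
        ≤ (∑ n, α n * ∫ y, g n y ∂Pbar)
          + c * ∑ n, α n * ∫ x, ‖gradient (ψs n) x - gradient (ψ n) x‖ ^ 2 ∂(P n) := by
          linarith
      _ = ∑ n, α n * ((∫ y, g n y ∂Pbar)
          + c * ∫ x, ‖gradient (ψs n) x - gradient (ψ n) x‖ ^ 2 ∂(P n)) := hexp.symm
      _ ≤ _ := hsum_le
  have hceq : (1:ℝ) / (2 * B) = c := by rw [hc]; ring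
  refine ⟨by rw [hceq]; exact hmain, ?_⟩
  -- second conclusion
  intro n
  have hInonneg : ∀ m, 0 ≤ ∫ x, ‖gradient (ψs m) x - gradient (ψ m) x‖ ^ 2 ∂(P m) :=
    fun m => integral_nonneg fun x => sq_nonneg _
  have hterm : α n * ∫ x, ‖gradient (ψs n) x - gradient (ψ n) x‖ ^ 2 ∂(P n)
      ≤ ∑ m, α m * ∫ x, ‖gradient (ψs m) x - gradient (ψ m) x‖ ^ 2 ∂(P m) :=
    Finset.single_le_sum (fun m _ => mul_nonneg (hα m).le (hInonneg m)) (Finset.mem_univ n)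
  have h5 : c * (α n * ∫ x, ‖gradient (ψs n) x - gradient (ψ n) x‖ ^ 2 ∂(P n)) ≤ Δ :=
    le_trans (mul_le_mul_of_nonneg_left hterm hcpos.le) hmain
  have hBc : 2 * B * c = 1 := by rw [hc]; field_simp
  have h6 := mul_le_mul_of_nonneg_left h5 (by positivity : (0:ℝ) ≤ 2 * B)
  rw [show 2 * B * (c * (α n * ∫ x, ‖gradient (ψs n) x - gradient (ψ n) x‖ ^ 2 ∂(P n)))
      = (2 * B * c) * (α n * ∫ x, ‖gradient (ψs n) x - gradient (ψ n) x‖ ^ 2 ∂(P n)) by ring,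
    hBc, one_mul] at h6
  rw [le_div_iff₀ (hα n)]
  linarith
end

section
/- Unbiasedness of the congruence-regularized objective. Under the hypotheses of Theorem 1 (optimal congruent potentials {ψₙ*}; B-smooth differentiable convex ψₙ with differentiable (1/B)-strongly convex conjugates ψ̄ₙ satisfying ∇ψ̄ₙ(∇ψₙ(x)) = x for all x, for some finite B > 0), it holds that Σₙ αₙ ∫ ψₙ dPₙ + ∫ [Σₙ αₙ ψ̄ₙ(y) − ‖y‖²/2]₊ dP̄(y) ≥ Σₙ αₙ ∫ ψₙ* dPₙ; i.e., MultiCorr({αₙ,Pₙ} | {ψₙ}) plus the congruence regularizer R₁^{P̄}({αₙ},{ψ̄ₙ}) = ∫ [Σₙ αₙ ψ̄ₙ(y) − ‖y‖²/2]₊ dP̄(y) is bounded below by MultiCorr({αₙ,Pₙ} | {ψₙ*}). -/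
open MeasureTheory RealInnerProductSpace

section Aux

variable {F : Type*} [NormedAddCommGroup F] [InnerProductSpace ℝ F] [CompleteSpace F]

lemma gradient_convex_ineq {f : F → ℝ} (hconv : ConvexOn ℝ Set.univ f)
    (hdiff : Differentiable ℝ f) (x x' : F) :
    ⟪gradient f x, x' - x⟫ ≤ f x' - f x := by
  set v := x' - x with hv
  have hinner : HasDerivAt (fun t : ℝ => x + t • v) v 0 := by
    simpa using ((hasDerivAt_id (0 : ℝ)).smul_const v).const_add x
  have hF : HasFDerivAt f (InnerProductSpace.toDual ℝ F (gradient f x)) x :=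
    (hdiff x).hasGradientAt
  have h0 : (fun t : ℝ => x + t • v) 0 = x := by simp
  have hc : HasFDerivAt f (InnerProductSpace.toDual ℝ F (gradient f x))
      ((fun t : ℝ => x + t • v) 0) := by rw [h0]; exact hF
  have hg : HasDerivAt (fun t : ℝ => f (x + t • v)) ⟪gradient f x, v⟫ 0 := by
    have := hc.comp_hasDerivAt (0 : ℝ) hinner
    simpa [Function.comp_def, InnerProductSpace.toDual_apply_apply] using this
  have hgc : ConvexOn ℝ Set.univ (fun t : ℝ => f (x + t • v)) := by
    have heq : (f ∘ (AffineMap.lineMap x x' : ℝ →ᵃ[ℝ] F)) = fun t : ℝ => f (x + t • v) := by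
      funext t
      simp [AffineMap.lineMap_apply, hv, add_comm]
    have := hconv.comp_affineMap (AffineMap.lineMap x x' : ℝ →ᵃ[ℝ] F)
    simpa [heq] using this
  have hs := hgc.le_slope_of_hasDerivAt (Set.mem_univ (0 : ℝ)) (Set.mem_univ 1) one_pos hg
  have hslope : slope (fun t : ℝ => f (x + t • v)) 0 1 = f x' - f x := by
    rw [slope_def_field]
    simp [hv]
  linarith [hs.trans_eq hslope]

lemma conj_eq_at_gradient {f fb : F → ℝ} (hconv : ConvexOn ℝ Set.univ f)
    (hdiff : Differentiable ℝ f)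
    (hconj : ∀ y, IsLUB (Set.range fun x => ⟪x, y⟫ - f x) (fb y)) (x : F) :
    fb (gradient f x) = ⟪x, gradient f x⟫ - f x := by
  refine le_antisymm ((hconj _).2 ?_) ((hconj _).1 (Set.mem_range_self x))
  rintro z ⟨x', rfl⟩
  show ⟪x', gradient f x⟫ - f x' ≤ ⟪x, gradient f x⟫ - f x
  have h := gradient_convex_ineq hconv hdiff x x'
  have h2 : ⟪gradient f x, x' - x⟫ =
      ⟪x', gradient f x⟫ - ⟪x, gradient f x⟫ := by
    rw [inner_sub_right, real_inner_comm x' (gradient f x), real_inner_comm x (gradient f x)]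
  simp only [h2] at h
  linarith

end Aux

lemma measurable_gradient' {D : ℕ} (f : EuclideanSpace ℝ (Fin D) → ℝ) :
    Measurable (gradient f) := by
  have h := measurable_fderiv ℝ f
  exact ((InnerProductSpace.toDual ℝ (EuclideanSpace ℝ (Fin D))).symm.continuous.measurable).comp h

/-- Unbiasedness of the congruence-regularized objective. Under the hypotheses
of Theorem 1, `MultiCorr({αₙ,Pₙ} | {ψₙ})` plus the congruence regularizer
`∫ [Σₙ αₙ ψ̄ₙ(y) − ‖y‖²/2]₊ dP̄` is bounded below by
`MultiCorr({αₙ,Pₙ} | {ψₙ*})`. -/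
theorem congruence_regularized_objective_unbiased {D N : ℕ}
    (P : Fin N → Measure (EuclideanSpace ℝ (Fin D)))
    (Pbar : Measure (EuclideanSpace ℝ (Fin D)))
    [∀ n, IsProbabilityMeasure (P n)] [IsProbabilityMeasure Pbar]
    (α : Fin N → ℝ) (hα : ∀ n, 0 < α n) (hαsum : ∑ n, α n = 1)
    -- optimal congruent potentials ψₙ* with conjugates ψ̄ₙ*
    (ψs ψbs : Fin N → EuclideanSpace ℝ (Fin D) → ℝ)
    (hψs_conv : ∀ n, ConvexOn ℝ Set.univ (ψs n))
    (hψs_diff : ∀ n, Differentiable ℝ (ψs n))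
    (hψbs_diff : ∀ n, Differentiable ℝ (ψbs n))
    (hψbs_conj : ∀ n y, IsLUB (Set.range fun x => ⟪x, y⟫ - ψs n x) (ψbs n y))
    (hpush : ∀ n, (P n).map (gradient (ψs n)) = Pbar)
    (hsinv : ∀ n x, gradient (ψbs n) (gradient (ψs n) x) = x)
    (hcong : ∀ y, ∑ n, α n * ψbs n y = ‖y‖ ^ 2 / 2)
    (hcongGrad : ∀ y, ∑ n, α n • gradient (ψbs n) y = y)
    -- candidate potentials ψₙ with conjugates ψ̄ₙ
    (B : ℝ) (hB : 0 < B)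
    (ψ ψb : Fin N → EuclideanSpace ℝ (Fin D) → ℝ)
    (hψ_conv : ∀ n, ConvexOn ℝ Set.univ (ψ n))
    (hψ_diff : ∀ n, Differentiable ℝ (ψ n))
    (hψ_smooth : ∀ n x y, ‖gradient (ψ n) x - gradient (ψ n) y‖ ≤ B * ‖x - y‖)
    (hψb_diff : ∀ n, Differentiable ℝ (ψb n))
    (hψb_conj : ∀ n y, IsLUB (Set.range fun x => ⟪x, y⟫ - ψ n x) (ψb n y))
    (hψb_sconv : ∀ n, ConvexOn ℝ Set.univ (fun y => ψb n y - (1 / B) / 2 * ‖y‖ ^ 2))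
    (hψb_inv : ∀ n x, gradient (ψb n) (gradient (ψ n) x) = x)
    -- integrability of the stated integrals
    (hint1 : ∀ n, Integrable (ψ n) (P n))
    (hint2 : ∀ n, Integrable (ψs n) (P n))
    (hint3 : Integrable (fun y => max (∑ n, α n * ψb n y - ‖y‖ ^ 2 / 2) 0) Pbar) :
    (∑ n, α n * ∫ x, ψ n x ∂(P n)) +
        ∫ y, max (∑ n, α n * ψb n y - ‖y‖ ^ 2 / 2) 0 ∂Pbar ≥
      ∑ n, α n * ∫ x, ψs n x ∂(P n) := by
  classical
  set r : Fin N → EuclideanSpace ℝ (Fin D) → ℝ := fun n y =>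
    ψ n (gradient (ψbs n) y) - ψs n (gradient (ψbs n) y) with hr_def
  have hgs_meas : ∀ n, Measurable (gradient (ψs n)) := fun n => measurable_gradient' _
  have hgbs_meas : ∀ n, Measurable (gradient (ψbs n)) := fun n => measurable_gradient' _
  have hr_meas : ∀ n, Measurable (r n) := by
    intro n
    rw [hr_def]
    exact ((hψ_diff n).continuous.measurable.comp (hgbs_meas n)).sub
      ((hψs_diff n).continuous.measurable.comp (hgbs_meas n))
  -- integral transfer
  have hr_int : ∀ n, Integrable (r n) Pbar := by
    intro n
    rw [← hpush n, integrable_map_measure (hr_meas n).aestronglyMeasurable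
      (hgs_meas n).aemeasurable]
    have : (r n ∘ gradient (ψs n)) = fun x => ψ n x - ψs n x := by
      funext x; simp [hr_def, Function.comp, hsinv n x]
    rw [this]
    exact (hint1 n).sub (hint2 n)
  have hr_eq : ∀ n, ∫ y, r n y ∂Pbar = ∫ x, ψ n x - ψs n x ∂(P n) := by
    intro n
    rw [← hpush n, integral_map (hgs_meas n).aemeasurable (hr_meas n).aestronglyMeasurable]
    congr 1
    funext x
    simp [hr_def, hsinv n x]
  -- pointwise a.e. bound
  have hae : ∀ n, ∀ᵐ y ∂Pbar, ψbs n y - ψb n y ≤ r n y := by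
    intro n
    rw [← hpush n]
    rw [ae_map_iff (hgs_meas n).aemeasurable]
    · refine Filter.Eventually.of_forall fun x => ?_
      show ψbs n (gradient (ψs n) x) - ψb n (gradient (ψs n) x) ≤ r n (gradient (ψs n) x)
      have hr : r n (gradient (ψs n) x) = ψ n x - ψs n x := by simp [hr_def, hsinv n x]
      have hFY : ⟪x, gradient (ψs n) x⟫ - ψ n x ≤ ψb n (gradient (ψs n) x) :=
        (hψb_conj n _).1 (Set.mem_range_self x)
      have heq : ψbs n (gradient (ψs n) x) = ⟪x, gradient (ψs n) x⟫ - ψs n x :=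
        conj_eq_at_gradient (hψs_conv n) (hψs_diff n) (hψbs_conj n) x
      rw [hr, heq]; linarith
    · exact measurableSet_le
        (((hψbs_diff n).continuous.measurable).sub ((hψb_diff n).continuous.measurable))
        (hr_meas n)
  -- assemble
  have hsum_int : Integrable (fun y => ∑ n, α n * r n y) Pbar :=
    integrable_finset_sum _ fun n _ => (hr_int n).const_mul (α n)
  have hnonneg : 0 ≤ ∫ y, (∑ n, α n * r n y) + max (∑ n, α n * ψb n y - ‖y‖ ^ 2 / 2) 0 ∂Pbar := by
    refine integral_nonneg_of_ae ?_
    have hall : ∀ᵐ y ∂Pbar, ∀ n, ψbs n y - ψb n y ≤ r n y := (ae_all_iff).2 hae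
    filter_upwards [hall] with y hy
    have h1 : ∑ n, α n * (ψbs n y - ψb n y) ≤ ∑ n, α n * r n y :=
      Finset.sum_le_sum fun n _ => mul_le_mul_of_nonneg_left (hy n) (hα n).le
    have h2 : ∑ n, α n * (ψbs n y - ψb n y) = ‖y‖ ^ 2 / 2 - ∑ n, α n * ψb n y := by
      rw [← hcong y, ← Finset.sum_sub_distrib]
      exact Finset.sum_congr rfl fun n _ => by ring
    have h4 : ‖y‖ ^ 2 / 2 - ∑ n, α n * ψb n y ≤ ∑ n, α n * r n y := h2 ▸ h1
    have h3 : ∑ n, α n * ψb n y - ‖y‖ ^ 2 / 2 ≤ max (∑ n, α n * ψb n y - ‖y‖ ^ 2 / 2) 0 :=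
      le_max_left _ _
    show (0 : ℝ) ≤ _
    linarith
  have hsplit : ∫ y, (∑ n, α n * r n y) + max (∑ n, α n * ψb n y - ‖y‖ ^ 2 / 2) 0 ∂Pbar
      = (∫ y, ∑ n, α n * r n y ∂Pbar) +
        ∫ y, max (∑ n, α n * ψb n y - ‖y‖ ^ 2 / 2) 0 ∂Pbar :=
    integral_add hsum_int hint3
  have hsum_eq : ∫ y, ∑ n, α n * r n y ∂Pbar
      = ∑ n, α n * (∫ x, ψ n x ∂(P n) - ∫ x, ψs n x ∂(P n)) := by
    rw [integral_finset_sum _ fun n _ => (hr_int n).const_mul (α n)]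
    refine Finset.sum_congr rfl fun n _ => ?_
    rw [integral_const_mul, hr_eq n, integral_sub (hint1 n) (hint2 n)]
  rw [hsplit, hsum_eq] at hnonneg
  have : ∑ n, α n * (∫ x, ψ n x ∂(P n) - ∫ x, ψs n x ∂(P n))
      = (∑ n, α n * ∫ x, ψ n x ∂(P n)) - ∑ n, α n * ∫ x, ψs n x ∂(P n) := by
    rw [← Finset.sum_sub_distrib]
    exact Finset.sum_congr rfl fun n _ => by ring
  rw [this] at hnonneg
  linarith
end

section
/- Twin conclusions (30) in the proof of Theorem 2. Under the hypotheses of Theorem 2 (optimal congruent potentials {ψₙ*}; ψₙ† differentiable convex; ψ̄ₙ‡ β-strongly convex and B-smooth differentiable convex with 0 < β ≤ B < ∞ and differentiable conjugates ψₙ‡ with mutually inverse gradients; λ > B/(2β²); τ ≥ 1 with P̄ ≤ τ·P̂ setwise), let Δ = M − Σₙ αₙ ∫ ψₙ* dPₙ where M is the regularized objective. Then for every n ∈ {1,…,N}: (i) ∫ ‖∇ψₙ*(x) − ∇ψₙ‡(x)‖² dPₙ(x) ≤ 2Δ/(αₙβ), and (ii) ∫ ‖∇ψ̄ₙ‡(∇ψₙ†(x))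 − x‖² dPₙ(x) ≤ 2Δ/(αₙ(λ − B/(2β²))). -/
open MeasureTheory RealInnerProductSpace

section Helpers

variable {E : Type*} [NormedAddCommGroup E] [InnerProductSpace ℝ E] [CompleteSpace E]

/-- First-order condition for a convex function with a gradient. -/
private lemma grad_first_order {f : E → ℝ} {G w : E} (hconv : ConvexOn ℝ Set.univ f)
    (hf : HasGradientAt f G w) (z : E) : f w + ⟪G, z - w⟫ ≤ f z := by
  have hfd : HasFDerivAt f (InnerProductSpace.toDual ℝ E G) w :=
    hasGradientAt_iff_hasFDerivAt.mp hf
  set γ : ℝ → E := fun t => w + t • (z - w) with hγ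
  have hγ0 : γ 0 = w := by simp [hγ]
  have hγ1 : γ 1 = z := by simp [hγ]
  have hγd : HasDerivAt γ (z - w) 0 := by
    have h := ((hasDerivAt_id (0:ℝ)).smul_const (z - w)).const_add w
    rw [one_smul] at h; exact h
  have hh : HasDerivAt (f ∘ γ) (⟪G, z - w⟫) 0 := by
    have := (hγ0 ▸ hfd).comp_hasDerivAt 0 hγd
    simpa [InnerProductSpace.toDual_apply_apply] using this
  have hconv' : ConvexOn ℝ Set.univ (f ∘ γ) := by
    have h := hconv.comp_affineMap (AffineMap.lineMap w z)
    rw [Set.preimage_univ] at h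
    have e : f ∘ γ = f ∘ AffineMap.lineMap w z := by
      funext t
      simp [hγ, AffineMap.lineMap_apply, add_comm]
    rw [e]; exact h
  have := hconv'.le_slope_of_hasDerivAt (Set.mem_univ 0) (Set.mem_univ 1) one_pos hh
  rw [slope_def_field] at this
  simp only [Function.comp, hγ0, hγ1] at this
  linarith

private lemma hasGradientAt_const_mul_norm_sq (c : ℝ) (y : E) :
    HasGradientAt (fun z : E => c * ‖z‖^2) ((2*c) • y) y := by
  rw [hasGradientAt_iff_hasFDerivAt]
  have h := ((hasFDerivAt_id y).inner ℝ (hasFDerivAt_id y)).const_mul c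
  convert h using 1
  · rfl
  · funext z
    simp [real_inner_self_eq_norm_sq]
  · ext v
    simp [InnerProductSpace.toDual_apply_apply, fderivInnerCLM_apply, real_inner_comm]
    ring

private lemma hasGradientAt_sub_sq {g : E → ℝ} (hdiff : Differentiable ℝ g) (β : ℝ) (w : E) :
    HasGradientAt (fun z => g z - β / 2 * ‖z‖ ^ 2) (gradient g w - β • w) w := by
  have h1 : HasGradientAt g (gradient g w) w := (hdiff w).hasGradientAt
  have h2 : HasGradientAt (fun z : E => β/2 * ‖z‖^2) (β • w) w := by
    have := hasGradientAt_const_mul_norm_sq (β/2) w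
    rwa [show 2*(β/2) = β by ring] at this
  rw [hasGradientAt_iff_hasFDerivAt] at h1 h2 ⊢
  have h3 := h1.sub h2
  rwa [← map_sub] at h3

private lemma bregman_lower {g : E → ℝ} {β : ℝ}
    (hdiff : Differentiable ℝ g)
    (hsc : ConvexOn ℝ Set.univ (fun y => g y - β / 2 * ‖y‖ ^ 2)) (y y' : E) :
    β / 2 * ‖y - y'‖ ^ 2 ≤ g y - g y' - ⟪gradient g y', y - y'⟫ := by
  have key := grad_first_order hsc (hasGradientAt_sub_sq hdiff β y') y
  simp only [inner_sub_left, real_inner_smul_left] at key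
  have hid : ‖y - y'‖^2 = ‖y‖^2 - 2*⟪y,y'⟫ + ‖y'‖^2 := norm_sub_sq_real y y'
  have h1 : ⟪y', y - y'⟫ = ⟪y,y'⟫ - ‖y'‖^2 := by
    rw [inner_sub_right, real_inner_comm, real_inner_self_eq_norm_sq]
  rw [h1] at key
  rw [hid]
  ring_nf at key ⊢
  linarith [key]

private lemma bregman_upper {g : E → ℝ} {β : ℝ} (hβ : 0 < β)
    (hdiff : Differentiable ℝ g)
    (hsc : ConvexOn ℝ Set.univ (fun y => g y - β / 2 * ‖y‖ ^ 2)) (y y' : E) :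
    g y - g y' - ⟪gradient g y', y - y'⟫ ≤
      1 / (2 * β) * ‖gradient g y - gradient g y'‖ ^ 2 := by
  have key := grad_first_order hsc (hasGradientAt_sub_sq hdiff β y) y'
  simp only [inner_sub_left, real_inner_smul_left] at key
  have hid : ‖y - y'‖^2 = ‖y‖^2 - 2*⟪y,y'⟫ + ‖y'‖^2 := norm_sub_sq_real y y'
  have h1 : ⟪y, y' - y⟫ = ⟪y,y'⟫ - ‖y‖^2 := by
    rw [inner_sub_right, real_inner_self_eq_norm_sq]
  have h2 : ⟪gradient g y, y' - y⟫ = - ⟪gradient g y, y - y'⟫ := by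
    rw [← inner_neg_right]; congr 1; abel
  rw [h1, h2] at key
  have step1 : g y - g y' - ⟪gradient g y', y - y'⟫ ≤
      ⟪gradient g y, y - y'⟫ - ⟪gradient g y', y - y'⟫ - β/2 * ‖y - y'‖^2 := by
    rw [hid]; ring_nf at key ⊢; linarith [key]
  have h3 : ⟪gradient g y, y - y'⟫ - ⟪gradient g y', y - y'⟫ ≤
      ‖gradient g y - gradient g y'‖ * ‖y - y'‖ := by
    have := real_inner_le_norm (gradient g y - gradient g y') (y - y')
    rwa [inner_sub_left] at this
  have h7 : ‖gradient g y - gradient g y'‖ * ‖y - y'‖ ≤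
      1/(2*β) * ‖gradient g y - gradient g y'‖^2 + β/2 * ‖y - y'‖^2 := by
    rw [← sub_nonneg]
    have hrw : 1/(2*β) * ‖gradient g y - gradient g y'‖^2 + β/2 * ‖y - y'‖^2
        - ‖gradient g y - gradient g y'‖ * ‖y - y'‖
        = (‖gradient g y - gradient g y'‖ - β * ‖y - y'‖)^2 / (2*β) := by
      field_simp; ring
    rw [hrw]; positivity
  linarith [step1, h3, h7]

private lemma isLUB_fenchel {f : E → ℝ} (hconv : ConvexOn ℝ Set.univ f)
    (hdiff : Differentiable ℝ f) {x₀ y : E} (hy : gradient f x₀ = y) {a : ℝ}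
    (h : IsLUB (Set.range fun x => ⟪x, y⟫ - f x) a) : a = ⟪x₀, y⟫ - f x₀ := by
  subst hy
  refine le_antisymm (h.2 ?_) (h.1 ⟨x₀, rfl⟩)
  rintro v ⟨x, rfl⟩
  have key := grad_first_order hconv (hdiff x₀).hasGradientAt x
  rw [inner_sub_right] at key
  have c1 : ⟪gradient f x₀, x⟫ = ⟪x, gradient f x₀⟫ := real_inner_comm _ _
  have c2 : ⟪gradient f x₀, x₀⟫ = ⟪x₀, gradient f x₀⟫ := real_inner_comm _ _
  simp only []
  linarith

/-- The per-sample integrand used in the proof. -/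
private noncomputable def AuxA (c β : ℝ) (ψdag ψbd ψs ψd : E → ℝ) (x : E) : ℝ :=
  (⟪x, gradient ψdag x⟫ - ψbd (gradient ψdag x))
  + c * ‖gradient ψbd (gradient ψdag x) - x‖ ^ 2
  - ψs x - β / 2 * ‖gradient ψs x - gradient ψd x‖ ^ 2

private lemma AuxA_point
    {ψs ψbs ψdag ψbd ψd : E → ℝ} {β c : ℝ} (hβ : 0 < β) (hc : 1/(2*β) ≤ c)
    (hψs_conv : ConvexOn ℝ Set.univ ψs) (hψs_diff : Differentiable ℝ ψs)
    (hψbs_conj : ∀ y, IsLUB (Set.range fun x => ⟪x, y⟫ - ψs x) (ψbs y))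
    (hψbd_conv : ConvexOn ℝ Set.univ ψbd) (hψbd_diff : Differentiable ℝ ψbd)
    (hψbd_sconv : ConvexOn ℝ Set.univ (fun y => ψbd y - β / 2 * ‖y‖ ^ 2))
    (hψd_conj : ∀ x, IsLUB (Set.range fun y => ⟪y, x⟫ - ψbd y) (ψd x))
    (hinv1 : ∀ x, gradient ψbd (gradient ψd x) = x)
    (x : E) :
    ψbs (gradient ψs x) - ψbd (gradient ψs x) ≤ AuxA c β ψdag ψbd ψs ψd x := by
  unfold AuxA
  set y := gradient ψdag x with hy
  set ys := gradient ψd x with hys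
  set z := gradient ψs x with hz
  have hfd : ψd x = ⟪ys, x⟫ - ψbd ys :=
    isLUB_fenchel hψbd_conv hψbd_diff (hinv1 x) (hψd_conj x)
  have hfs : ψbs z = ⟪x, z⟫ - ψs x :=
    isLUB_fenchel hψs_conv hψs_diff rfl (hψbs_conj z)
  have hbx : gradient ψbd ys = x := hinv1 x
  have bregup := bregman_upper hβ hψbd_diff hψbd_sconv y ys
  rw [hbx] at bregup
  have hcmul : 1/(2*β) * ‖gradient ψbd y - x‖^2 ≤ c * ‖gradient ψbd y - x‖^2 :=
    mul_le_mul_of_nonneg_right hc (sq_nonneg _)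
  have hiA : ⟪x, y - ys⟫ = ⟪x, y⟫ - ⟪x, ys⟫ := inner_sub_right _ _ _
  have hcomm : ⟪ys, x⟫ = ⟪x, ys⟫ := real_inner_comm _ _
  have partA : ψd x ≤ (⟪x, y⟫ - ψbd y) + c * ‖gradient ψbd y - x‖^2 := by
    linarith
  have breglow := bregman_lower hψbd_diff hψbd_sconv z ys
  rw [hbx] at breglow
  have hiB : ⟪x, z - ys⟫ = ⟪x, z⟫ - ⟪x, ys⟫ := inner_sub_right _ _ _
  linarith

variable [MeasurableSpace E] [BorelSpace E] [SecondCountableTopology E]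

private lemma measurable_gradient'_s13 (f : E → ℝ) : Measurable (gradient f) := by
  have h1 : Measurable (fderiv ℝ f) := measurable_fderiv ℝ f
  have h2 : Continuous (InnerProductSpace.toDual ℝ E).symm :=
    (InnerProductSpace.toDual ℝ E).symm.continuous
  exact h2.measurable.comp h1

private lemma AuxA_measurable {c β : ℝ} {ψdag ψbd ψs ψd : E → ℝ}
    (hbd : Continuous ψbd) (hs : Continuous ψs) :
    Measurable (AuxA c β ψdag ψbd ψs ψd) := by
  unfold AuxA
  have m1 : Measurable fun x : E => ⟪x, gradient ψdag x⟫ :=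
    measurable_id.inner (measurable_gradient'_s13 _)
  have m2 : Measurable fun x : E => ψbd (gradient ψdag x) :=
    hbd.measurable.comp (measurable_gradient'_s13 _)
  have m3 : Measurable fun x : E => ‖gradient ψbd (gradient ψdag x) - x‖^2 :=
    (((measurable_gradient'_s13 ψbd).comp (measurable_gradient'_s13 ψdag)).sub
      measurable_id).norm.pow_const 2
  have m4 : Measurable fun x : E => ‖gradient ψs x - gradient ψd x‖^2 :=
    ((measurable_gradient'_s13 ψs).sub (measurable_gradient'_s13 ψd)).norm.pow_const 2
  exact (((m1.sub m2).add (m3.const_mul c)).sub hs.measurable).sub (m4.const_mul (β/2))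

private lemma AuxA_integrable {c β : ℝ} {ψdag ψbd ψs ψd : E → ℝ} {μ : Measure E}
    (h1 : Integrable (fun x => ⟪x, gradient ψdag x⟫ - ψbd (gradient ψdag x)) μ)
    (h3 : Integrable (fun x => ‖gradient ψbd (gradient ψdag x) - x‖ ^ 2) μ)
    (hs : Integrable ψs μ)
    (h4 : Integrable (fun x => ‖gradient ψs x - gradient ψd x‖ ^ 2) μ) :
    Integrable (AuxA c β ψdag ψbd ψs ψd) μ := by
  unfold AuxA
  exact ((h1.add (h3.const_mul c)).sub hs).sub (h4.const_mul (β/2))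

set_option maxHeartbeats 1000000 in
private lemma AuxA_integral {c β : ℝ} {ψdag ψbd ψs ψd : E → ℝ} {μ : Measure E}
    (h1 : Integrable (fun x => ⟪x, gradient ψdag x⟫ - ψbd (gradient ψdag x)) μ)
    (h3 : Integrable (fun x => ‖gradient ψbd (gradient ψdag x) - x‖ ^ 2) μ)
    (hs : Integrable ψs μ)
    (h4 : Integrable (fun x => ‖gradient ψs x - gradient ψd x‖ ^ 2) μ) :
    ∫ x, AuxA c β ψdag ψbd ψs ψd x ∂μ
      = (∫ x, (⟪x, gradient ψdag x⟫ - ψbd (gradient ψdag x)) ∂μ)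
        + c * (∫ x, ‖gradient ψbd (gradient ψdag x) - x‖ ^ 2 ∂μ)
        - (∫ x, ψs x ∂μ)
        - β/2 * (∫ x, ‖gradient ψs x - gradient ψd x‖ ^ 2 ∂μ) := by
  unfold AuxA
  have i3 : Integrable (fun x => c * ‖gradient ψbd (gradient ψdag x) - x‖ ^ 2) μ :=
    h3.const_mul c
  have i4 : Integrable (fun x => β / 2 * ‖gradient ψs x - gradient ψd x‖ ^ 2) μ :=
    h4.const_mul _
  have i12 : Integrable (fun x => (⟪x, gradient ψdag x⟫ - ψbd (gradient ψdag x))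
      + c * ‖gradient ψbd (gradient ψdag x) - x‖ ^ 2) μ := h1.add i3
  have i123 : Integrable (fun x => (⟪x, gradient ψdag x⟫ - ψbd (gradient ψdag x))
      + c * ‖gradient ψbd (gradient ψdag x) - x‖ ^ 2 - ψs x) μ := i12.sub hs
  rw [integral_sub i123 i4, integral_sub i12 hs, integral_add h1 i3,
    integral_const_mul, integral_const_mul]

end Helpers

set_option maxHeartbeats 1000000 in
/-- Twin conclusions (30) in the proof of Theorem 2: with
`Δ = M − Σₙ αₙ ∫ ψₙ* dPₙ`, for every `n`,
(i) `∫ ‖∇ψₙ*(x) − ∇ψₙ‡(x)‖² dPₙ ≤ 2Δ/(αₙβ)` and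
(ii) `∫ ‖∇ψ̄ₙ‡(∇ψₙ†(x)) − x‖² dPₙ ≤ 2Δ/(αₙ(λ − B/(2β²)))`. -/
theorem theorem2_twin_conclusions {D N : ℕ}
    (P : Fin N → Measure (EuclideanSpace ℝ (Fin D)))
    (Pbar : Measure (EuclideanSpace ℝ (Fin D)))
    [∀ n, IsProbabilityMeasure (P n)] [IsProbabilityMeasure Pbar]
    (α : Fin N → ℝ) (hα : ∀ n, 0 < α n) (hαsum : ∑ n, α n = 1)
    -- optimal congruent potentials ψₙ* with conjugates ψ̄ₙ*
    (ψs ψbs : Fin N → EuclideanSpace ℝ (Fin D) → ℝ)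
    (hψs_conv : ∀ n, ConvexOn ℝ Set.univ (ψs n))
    (hψs_diff : ∀ n, Differentiable ℝ (ψs n))
    (hψbs_diff : ∀ n, Differentiable ℝ (ψbs n))
    (hψbs_conj : ∀ n y, IsLUB (Set.range fun x => ⟪x, y⟫ - ψs n x) (ψbs n y))
    (hpush : ∀ n, (P n).map (gradient (ψs n)) = Pbar)
    (hsinv : ∀ n x, gradient (ψbs n) (gradient (ψs n) x) = x)
    (hcong : ∀ y, ∑ n, α n * ψbs n y = ‖y‖ ^ 2 / 2)
    (hcongGrad : ∀ y, ∑ n, α n • gradient (ψbs n) y = y)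
    -- candidate potentials ψₙ† and ψ̄ₙ‡ with conjugates ψₙ‡
    (β B : ℝ) (hβ : 0 < β) (hβB : β ≤ B)
    (ψdag ψbd ψd : Fin N → EuclideanSpace ℝ (Fin D) → ℝ)
    (hψdag_conv : ∀ n, ConvexOn ℝ Set.univ (ψdag n))
    (hψdag_diff : ∀ n, Differentiable ℝ (ψdag n))
    (hψbd_conv : ∀ n, ConvexOn ℝ Set.univ (ψbd n))
    (hψbd_diff : ∀ n, Differentiable ℝ (ψbd n))
    (hψbd_sconv : ∀ n, ConvexOn ℝ Set.univ (fun y => ψbd n y - β / 2 * ‖y‖ ^ 2))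
    (hψbd_smooth : ∀ n x y, ‖gradient (ψbd n) x - gradient (ψbd n) y‖ ≤ B * ‖x - y‖)
    (hψd_diff : ∀ n, Differentiable ℝ (ψd n))
    (hψd_conj : ∀ n x, IsLUB (Set.range fun y => ⟪y, x⟫ - ψbd n y) (ψd n x))
    (hψd_lip : ∀ n x y, ‖gradient (ψd n) x - gradient (ψd n) y‖ ≤ (1 / β) * ‖x - y‖)
    (hinv1 : ∀ n x, gradient (ψbd n) (gradient (ψd n) x) = x)
    (hinv2 : ∀ n y, gradient (ψd n) (gradient (ψbd n) y) = y)
    -- regularization parameters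
    (lam : ℝ) (hlam : lam > B / (2 * β ^ 2))
    (τ : ℝ) (hτ : 1 ≤ τ)
    (Phat : Measure (EuclideanSpace ℝ (Fin D))) [IsProbabilityMeasure Phat]
    (hdom : ∀ A : Set (EuclideanSpace ℝ (Fin D)), MeasurableSet A →
      Pbar A ≤ ENNReal.ofReal τ * Phat A)
    -- integrability of the stated integrals
    (hintM1 : ∀ n, Integrable
      (fun x => ⟪x, gradient (ψdag n) x⟫ - ψbd n (gradient (ψdag n) x)) (P n))
    (hintM2 : Integrable (fun y => max (∑ n, α n * ψbd n y - ‖y‖ ^ 2 / 2) 0) Phat)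
    (hintM3 : ∀ n, Integrable
      (fun x => ‖gradient (ψbd n) (gradient (ψdag n) x) - x‖ ^ 2) (P n))
    (hint_s : ∀ n, Integrable (ψs n) (P n))
    -- the regularized objective
    (M : ℝ)
    (hM : M = (∑ n, α n * ∫ x, (⟪x, gradient (ψdag n) x⟫
          - ψbd n (gradient (ψdag n) x)) ∂(P n))
      + τ * ∫ y, max (∑ n, α n * ψbd n y - ‖y‖ ^ 2 / 2) 0 ∂Phat
      + lam * ∑ n, α n * ∫ x, ‖gradient (ψbd n) (gradient (ψdag n) x) - x‖ ^ 2 ∂(P n))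
    (hint_sd : ∀ n, Integrable
      (fun x => ‖gradient (ψs n) x - gradient (ψd n) x‖ ^ 2) (P n))
    (Δ : ℝ) (hΔ : Δ = M - ∑ n, α n * ∫ x, ψs n x ∂(P n)) :
    ∀ n, (∫ x, ‖gradient (ψs n) x - gradient (ψd n) x‖ ^ 2 ∂(P n) ≤
        2 * Δ / (α n * β)) ∧
      (∫ x, ‖gradient (ψbd n) (gradient (ψdag n) x) - x‖ ^ 2 ∂(P n) ≤
        2 * Δ / (α n * (lam - B / (2 * β ^ 2)))) := by
  set c : ℝ := B / (2 * β ^ 2) with hc_def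
  have hcpos : 0 < lam - c := sub_pos.mpr hlam
  have hc : 1 / (2 * β) ≤ c := by
    rw [hc_def, div_le_div_iff₀ (by positivity) (by positivity)]
    nlinarith [mul_le_mul_of_nonneg_left hβB hβ.le]
  have hτ0 : (0:ℝ) ≤ τ := by linarith
  -- pointwise inequality
  have hpoint : ∀ n x, ψbs n (gradient (ψs n) x) - ψbd n (gradient (ψs n) x) ≤
      AuxA c β (ψdag n) (ψbd n) (ψs n) (ψd n) x := fun n x =>
    AuxA_point hβ hc (hψs_conv n) (hψs_diff n) (hψbs_conj n) (hψbd_conv n)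
      (hψbd_diff n) (hψbd_sconv n) (hψd_conj n) (hinv1 n) x
  -- measurability / integrability
  have hmA : ∀ n, Measurable (AuxA c β (ψdag n) (ψbd n) (ψs n) (ψd n)) := fun n =>
    AuxA_measurable (hψbd_diff n).continuous (hψs_diff n).continuous
  have hAint : ∀ n, Integrable (AuxA c β (ψdag n) (ψbd n) (ψs n) (ψd n)) (P n) := fun n =>
    AuxA_integrable (hintM1 n) (hintM3 n) (hint_s n) (hint_sd n)
  have hAeq : ∀ n, ∫ x, AuxA c β (ψdag n) (ψbd n) (ψs n) (ψd n) x ∂(P n)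
      = (∫ x, (⟪x, gradient (ψdag n) x⟫ - ψbd n (gradient (ψdag n) x)) ∂(P n))
        + c * (∫ x, ‖gradient (ψbd n) (gradient (ψdag n) x) - x‖ ^ 2 ∂(P n))
        - (∫ x, ψs n x ∂(P n))
        - β/2 * (∫ x, ‖gradient (ψs n) x - gradient (ψd n) x‖ ^ 2 ∂(P n)) := fun n =>
    AuxA_integral (hintM1 n) (hintM3 n) (hint_s n) (hint_sd n)
  have hmf : ∀ n, Measurable (gradient (ψs n)) := fun n => measurable_gradient'_s13 _
  have hmg : ∀ n, Measurable (gradient (ψbs n)) := fun n => measurable_gradient'_s13 _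
  have hAt_meas : ∀ n, Measurable (fun y =>
      AuxA c β (ψdag n) (ψbd n) (ψs n) (ψd n) (gradient (ψbs n) y)) := fun n =>
    (hmA n).comp (hmg n)
  -- transfer to the barycenter measure
  have hAt_int : ∀ n, Integrable (fun y =>
      AuxA c β (ψdag n) (ψbd n) (ψs n) (ψd n) (gradient (ψbs n) y)) Pbar := by
    intro n
    rw [← hpush n, integrable_map_measure (hAt_meas n).aestronglyMeasurable
      (hmf n).aemeasurable]
    have heq : (fun y => AuxA c β (ψdag n) (ψbd n) (ψs n) (ψd n) (gradient (ψbs n) y))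
        ∘ (gradient (ψs n)) = AuxA c β (ψdag n) (ψbd n) (ψs n) (ψd n) := by
      funext x; simp [Function.comp, hsinv n x]
    rw [heq]; exact hAint n
  have hAt_eq : ∀ n, ∫ y, AuxA c β (ψdag n) (ψbd n) (ψs n) (ψd n) (gradient (ψbs n) y) ∂Pbar
      = ∫ x, AuxA c β (ψdag n) (ψbd n) (ψs n) (ψd n) x ∂(P n) := by
    intro n
    rw [← hpush n, integral_map (hmf n).aemeasurable (hAt_meas n).aestronglyMeasurable]
    refine integral_congr_ae (Filter.Eventually.of_forall fun x => ?_)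
    simp [hsinv n x]
  have hae : ∀ᵐ y ∂Pbar, ∀ n, gradient (ψs n) (gradient (ψbs n) y) = y := by
    rw [MeasureTheory.ae_all_iff]
    intro n
    rw [← hpush n, MeasureTheory.ae_map_iff
      (p := fun y => gradient (ψs n) (gradient (ψbs n) y) = y) (hmf n).aemeasurable
      (measurableSet_eq_fun
        (show Measurable fun y => gradient (ψs n) (gradient (ψbs n) y) from
          (hmf n).comp (hmg n)) measurable_id)]
    exact Filter.Eventually.of_forall (fun x => by rw [hsinv n x])
  -- domination of Pbar by τ • Phat
  have hle : Pbar ≤ (ENNReal.ofReal τ) • Phat := by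
    rw [Measure.le_iff]; intro s hs
    rw [Measure.smul_apply, smul_eq_mul]; exact hdom s hs
  have hGm_nonneg : ∀ y : EuclideanSpace ℝ (Fin D),
      0 ≤ max (∑ n, α n * ψbd n y - ‖y‖ ^ 2 / 2) 0 := fun y => le_max_right _ _
  have hGm_int_sm : Integrable (fun y => max (∑ n, α n * ψbd n y - ‖y‖ ^ 2 / 2) 0)
      ((ENNReal.ofReal τ) • Phat) := hintM2.smul_measure ENNReal.ofReal_ne_top
  have hGm_int_Pbar : Integrable (fun y => max (∑ n, α n * ψbd n y - ‖y‖ ^ 2 / 2) 0) Pbar :=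
    hGm_int_sm.mono_measure hle
  have hGm_bound : ∫ y, max (∑ n, α n * ψbd n y - ‖y‖ ^ 2 / 2) 0 ∂Pbar
      ≤ τ * ∫ y, max (∑ n, α n * ψbd n y - ‖y‖ ^ 2 / 2) 0 ∂Phat := by
    have h1 := integral_mono_measure hle (Filter.Eventually.of_forall hGm_nonneg) hGm_int_sm
    rwa [integral_smul_measure, ENNReal.toReal_ofReal hτ0, smul_eq_mul] at h1
  -- the central integral inequality
  have hmono : ∫ y, (-(max (∑ n, α n * ψbd n y - ‖y‖ ^ 2 / 2) 0)) ∂Pbar ≤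
      ∫ y, (∑ n, α n * AuxA c β (ψdag n) (ψbd n) (ψs n) (ψd n) (gradient (ψbs n) y)) ∂Pbar := by
    refine integral_mono_ae hGm_int_Pbar.neg
      (integrable_finset_sum _ fun n _ => (hAt_int n).const_mul (α n)) ?_
    filter_upwards [hae] with y hy
    have h1 : ∀ n, ψbs n y - ψbd n y ≤
        AuxA c β (ψdag n) (ψbd n) (ψs n) (ψd n) (gradient (ψbs n) y) := by
      intro n
      have h := hpoint n (gradient (ψbs n) y)
      rwa [hy n] at h
    have h2 : ∑ n, α n * (ψbs n y - ψbd n y) ≤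
        ∑ n, α n * AuxA c β (ψdag n) (ψbd n) (ψs n) (ψd n) (gradient (ψbs n) y) :=
      Finset.sum_le_sum fun n _ => mul_le_mul_of_nonneg_left (h1 n) (hα n).le
    have h3 : ∑ n, α n * (ψbs n y - ψbd n y) = ‖y‖ ^ 2 / 2 - ∑ n, α n * ψbd n y := by
      simp only [mul_sub]
      rw [Finset.sum_sub_distrib, hcong y]
    have h4 := le_max_left (∑ n, α n * ψbd n y - ‖y‖ ^ 2 / 2) 0
    show -(max (∑ n, α n * ψbd n y - ‖y‖ ^ 2 / 2) 0) ≤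
      ∑ n, α n * AuxA c β (ψdag n) (ψbd n) (ψs n) (ψd n) (gradient (ψbs n) y)
    linarith [h2, h3, h4]
  rw [integral_neg, integral_finset_sum _ (fun n _ => (hAt_int n).const_mul (α n))] at hmono
  simp_rw [integral_const_mul] at hmono
  have hmono2 : -(∫ y, max (∑ n, α n * ψbd n y - ‖y‖ ^ 2 / 2) 0 ∂Pbar) ≤
      ∑ n, α n * ∫ x, AuxA c β (ψdag n) (ψbd n) (ψs n) (ψd n) x ∂(P n) := by
    calc -(∫ y, max (∑ n, α n * ψbd n y - ‖y‖ ^ 2 / 2) 0 ∂Pbar)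
        ≤ ∑ n, α n * ∫ y, AuxA c β (ψdag n) (ψbd n) (ψs n) (ψd n)
            (gradient (ψbs n) y) ∂Pbar := hmono
      _ = ∑ n, α n * ∫ x, AuxA c β (ψdag n) (ψbd n) (ψs n) (ψd n) x ∂(P n) :=
          Finset.sum_congr rfl fun n _ => by rw [hAt_eq n]
  -- sum decomposition
  have hsum_eq : (∑ n, α n * ∫ x, AuxA c β (ψdag n) (ψbd n) (ψs n) (ψd n) x ∂(P n))
      + ∑ n, α n * (β/2 * (∫ x, ‖gradient (ψs n) x - gradient (ψd n) x‖ ^ 2 ∂(P n))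
          + (lam - c) * (∫ x, ‖gradient (ψbd n) (gradient (ψdag n) x) - x‖ ^ 2 ∂(P n)))
      = (∑ n, α n * ∫ x, (⟪x, gradient (ψdag n) x⟫
            - ψbd n (gradient (ψdag n) x)) ∂(P n))
        + lam * (∑ n, α n * ∫ x, ‖gradient (ψbd n) (gradient (ψdag n) x) - x‖ ^ 2 ∂(P n))
        - (∑ n, α n * ∫ x, ψs n x ∂(P n)) := by
    rw [← Finset.sum_add_distrib, Finset.mul_sum, ← Finset.sum_add_distrib,
      ← Finset.sum_sub_distrib]
    exact Finset.sum_congr rfl fun n _ => by rw [hAeq n]; ring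
  have hgoal : ∑ n, α n * (β/2 * (∫ x, ‖gradient (ψs n) x - gradient (ψd n) x‖ ^ 2 ∂(P n))
      + (lam - c) * (∫ x, ‖gradient (ψbd n) (gradient (ψdag n) x) - x‖ ^ 2 ∂(P n))) ≤ Δ := by
    rw [hΔ, hM]
    linarith [hmono2, hGm_bound, hsum_eq]
  -- conclude for each n
  intro n
  have hI : 0 ≤ ∫ x, ‖gradient (ψs n) x - gradient (ψd n) x‖ ^ 2 ∂(P n) :=
    integral_nonneg fun x => sq_nonneg _
  have hJ : 0 ≤ ∫ x, ‖gradient (ψbd n) (gradient (ψdag n) x) - x‖ ^ 2 ∂(P n) :=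
    integral_nonneg fun x => sq_nonneg _
  have hterm : ∀ m ∈ Finset.univ, (0:ℝ) ≤ α m *
      (β/2 * (∫ x, ‖gradient (ψs m) x - gradient (ψd m) x‖ ^ 2 ∂(P m))
        + (lam - c) * (∫ x, ‖gradient (ψbd m) (gradient (ψdag m) x) - x‖ ^ 2 ∂(P m))) := by
    intro m _
    have hIm : 0 ≤ ∫ x, ‖gradient (ψs m) x - gradient (ψd m) x‖ ^ 2 ∂(P m) :=
      integral_nonneg fun x => sq_nonneg _
    have hJm : 0 ≤ ∫ x, ‖gradient (ψbd m) (gradient (ψdag m) x) - x‖ ^ 2 ∂(P m) :=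
      integral_nonneg fun x => sq_nonneg _
    refine mul_nonneg (hα m).le ?_
    have h1 : 0 ≤ β/2 * (∫ x, ‖gradient (ψs m) x - gradient (ψd m) x‖ ^ 2 ∂(P m)) :=
      mul_nonneg (by linarith) hIm
    have h2 : 0 ≤ (lam - c) * (∫ x, ‖gradient (ψbd m) (gradient (ψdag m) x) - x‖ ^ 2 ∂(P m)) :=
      mul_nonneg hcpos.le hJm
    linarith
  have hnth := Finset.single_le_sum hterm (Finset.mem_univ n)
  have hkey : α n * (β/2 * (∫ x, ‖gradient (ψs n) x - gradient (ψd n) x‖ ^ 2 ∂(P n))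
      + (lam - c) * (∫ x, ‖gradient (ψbd n) (gradient (ψdag n) x) - x‖ ^ 2 ∂(P n))) ≤ Δ :=
    le_trans hnth hgoal
  have hΔ0 : 0 ≤ Δ := le_trans (hterm n (Finset.mem_univ n)) hkey
  have hsplit : α n * (β/2 * (∫ x, ‖gradient (ψs n) x - gradient (ψd n) x‖ ^ 2 ∂(P n))
      + (lam - c) * (∫ x, ‖gradient (ψbd n) (gradient (ψdag n) x) - x‖ ^ 2 ∂(P n)))
      = α n * (β/2 * (∫ x, ‖gradient (ψs n) x - gradient (ψd n) x‖ ^ 2 ∂(P n)))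
      + α n * ((lam - c) * (∫ x, ‖gradient (ψbd n) (gradient (ψdag n) x) - x‖ ^ 2 ∂(P n))) := by
    ring
  have hA1 : 0 ≤ α n * ((lam - c) *
      (∫ x, ‖gradient (ψbd n) (gradient (ψdag n) x) - x‖ ^ 2 ∂(P n))) :=
    mul_nonneg (hα n).le (mul_nonneg hcpos.le hJ)
  have hA2 : 0 ≤ α n * (β/2 *
      (∫ x, ‖gradient (ψs n) x - gradient (ψd n) x‖ ^ 2 ∂(P n))) :=
    mul_nonneg (hα n).le (mul_nonneg (by linarith) hI)
  constructor
  · rw [le_div_iff₀ (mul_pos (hα n) hβ)]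
    have hr : (∫ x, ‖gradient (ψs n) x - gradient (ψd n) x‖ ^ 2 ∂(P n)) * (α n * β)
        = 2 * (α n * (β/2 * (∫ x, ‖gradient (ψs n) x - gradient (ψd n) x‖ ^ 2 ∂(P n)))) := by
      ring
    rw [hr]
    linarith [hkey, hA1, hsplit]
  · rw [le_div_iff₀ (mul_pos (hα n) hcpos)]
    have hr : (∫ x, ‖gradient (ψbd n) (gradient (ψdag n) x) - x‖ ^ 2 ∂(P n)) * (α n * (lam - c))
        = α n * ((lam - c) * (∫ x, ‖gradient (ψbd n) (gradient (ψdag n) x) - x‖ ^ 2 ∂(P n))) := by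
      ring
    rw [hr]
    linarith [hkey, hA2, hsplit, hΔ0]
end

section
/- Intermediate lower bound (23)–(24) in the proof of Theorem 2. Under the hypotheses of Theorem 2 (ψₙ† differentiable convex; ψ̄ₙ‡ β-strongly convex and B-smooth differentiable convex with 0 < β ≤ B < ∞ and differentiable conjugates ψₙ‡ with (1/β)-Lipschitz gradients and mutually inverse gradients; λ > 0; τ ≥ 1; Pₙ, P̂ Borel probability measures; αₙ > 0 with Σₙ αₙ = 1), the regularized objective M satisfies M ≥ Σₙ αₙ ∫ ψₙ‡ dPₙ + τ · ∫ [Σₙ αₙ ψ̄ₙ‡(y) − ‖y‖²/2]₊ dP̂(y) + Σₙ αₙ (λ − B/(2β²)) · ∫ ‖∇ψ̄ₙ‡(∇ψₙ†(x)) − x‖² dPₙ(x). -/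
open MeasureTheory RealInnerProductSpace

variable {E : Type*} [NormedAddCommGroup E] [InnerProductSpace ℝ E] [CompleteSpace E]

lemma aux_grad_convex {f : E → ℝ} (hc : ConvexOn ℝ Set.univ f) {a g : E}
    (hg : HasGradientAt f g a) (y : E) : f a + ⟪g, y - a⟫ ≤ f y := by
  set c : ℝ → E := fun t => a + t • (y - a) with hc_def
  have hφ : HasDerivAt (fun t : ℝ => f (c t)) ⟪g, y - a⟫ 0 := by
    have hcurve : HasDerivAt c (y - a) 0 := by
      simpa [hc_def] using ((hasDerivAt_id (0:ℝ)).smul_const (y - a)).const_add a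
    have h0 : c 0 = a := by simp [hc_def]
    have hfd : HasFDerivAt f (InnerProductSpace.toDual ℝ E g) (c 0) := by
      rw [h0]; exact hg.hasFDerivAt
    have := hfd.comp_hasDerivAt 0 hcurve
    simp only [InnerProductSpace.toDual_apply_apply] at this
    exact this
  have hconv : ConvexOn ℝ Set.univ (fun t : ℝ => f (c t)) := by
    have h := hc.comp_affineMap (AffineMap.lineMap a y)
    have he : (fun t : ℝ => f (c t)) = f ∘ (AffineMap.lineMap a y) := by
      funext t
      simp [hc_def, AffineMap.lineMap_apply, add_comm]
    rw [he]
    simpa using h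
  have hslope := hconv.le_slope_of_hasDerivAt (Set.mem_univ (0:ℝ)) (Set.mem_univ (1:ℝ))
    zero_lt_one hφ
  have hs : slope (fun t : ℝ => f (c t)) 0 1 = f y - f a := by
    simp [slope, hc_def]
  rw [hs] at hslope
  linarith

lemma aux_sq_grad (β : ℝ) (u : E) :
    HasFDerivAt (fun z : E => β / 2 * ‖z‖ ^ 2) (InnerProductSpace.toDual ℝ E (β • u)) u := by
  have h1 := ((hasFDerivAt_id u).inner ℝ (hasFDerivAt_id u)).const_mul (β / 2)
  have he : (fun z : E => β / 2 * ⟪z, z⟫) = fun z : E => β / 2 * ‖z‖ ^ 2 := by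
    funext z; rw [real_inner_self_eq_norm_sq]
  simp only [id_eq] at h1
  rw [he] at h1
  refine h1.congr_fderiv ?_
  ext v
  simp [fderivInnerCLM_apply, real_inner_smul_left, real_inner_comm]
  ring

lemma aux_strong {ψ : E → ℝ} {β : ℝ} (hdiff : Differentiable ℝ ψ)
    (hsc : ConvexOn ℝ Set.univ (fun y => ψ y - β / 2 * ‖y‖ ^ 2)) (u y : E) :
    ψ u + ⟪gradient ψ u, y - u⟫ + β / 2 * ‖y - u‖ ^ 2 ≤ ψ y := by
  have hg : HasGradientAt (fun z => ψ z - β / 2 * ‖z‖ ^ 2) (gradient ψ u - β • u) u := by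
    have h3 := (hdiff u).hasGradientAt.hasFDerivAt.sub (aux_sq_grad β u)
    rw [← map_sub] at h3
    exact hasGradientAt_iff_hasFDerivAt.mpr h3
  have hkey := aux_grad_convex hsc hg y
  have hexp : ⟪gradient ψ u - β • u, y - u⟫
      = ⟪gradient ψ u, y - u⟫ - β * ⟪u, y - u⟫ := by
    rw [inner_sub_left, real_inner_smul_left]
  have hnorm : ‖y - u‖ ^ 2 = ‖y‖ ^ 2 - 2 * ⟪y, u⟫ + ‖u‖ ^ 2 := norm_sub_sq_real y u
  have hir : ⟪u, y - u⟫ = ⟪u, y⟫ - ‖u‖ ^ 2 := by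
    rw [inner_sub_right, real_inner_self_eq_norm_sq]
  have hcomm : ⟪y, u⟫ = ⟪u, y⟫ := real_inner_comm u y
  rw [hexp, hir] at hkey
  rw [hnorm, hcomm]
  linarith

lemma aux_key {ψbd ψd : E → ℝ} {β B : ℝ} (hβ : 0 < β) (hβB : β ≤ B)
    (hconv : ConvexOn ℝ Set.univ ψbd) (hdiff : Differentiable ℝ ψbd)
    (hsconv : ConvexOn ℝ Set.univ (fun y => ψbd y - β / 2 * ‖y‖ ^ 2))
    (hconj : ∀ x, IsLUB (Set.range fun y => ⟪y, x⟫ - ψbd y) (ψd x))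
    (hinv1 : ∀ x, gradient ψbd (gradient ψd x) = x) (x u : E) :
    ψd x - B / (2 * β ^ 2) * ‖gradient ψbd u - x‖ ^ 2 ≤ ⟪x, u⟫ - ψbd u := by
  set ys := gradient ψd x with hys
  -- Step 1: ψd x ≤ ⟪ys, x⟫ - ψbd ys
  have hub : ψd x ≤ ⟪ys, x⟫ - ψbd ys := by
    apply (hconj x).2
    rintro z ⟨y, rfl⟩
    have h1 := aux_grad_convex hconv (hdiff ys).hasGradientAt y
    rw [hinv1 x] at h1
    have h2 : ⟪x, y - ys⟫ = ⟪x, y⟫ - ⟪x, ys⟫ := inner_sub_right x y ys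
    have h3 : ⟪y, x⟫ = ⟪x, y⟫ := real_inner_comm x y
    have h4 : ⟪ys, x⟫ = ⟪x, ys⟫ := real_inner_comm x ys
    rw [h2] at h1
    dsimp only
    rw [h3, h4]
    linarith
  -- Step 2: strong convexity at u
  have hst := aux_strong hdiff hsconv u ys
  -- Step 3: combine
  have hinner : ⟪gradient ψbd u, ys - u⟫
      = ⟪x, ys - u⟫ - ⟪x - gradient ψbd u, ys - u⟫ := by
    rw [inner_sub_left]; ring
  have hcs : ⟪x - gradient ψbd u, ys - u⟫ ≤ ‖x - gradient ψbd u‖ * ‖ys - u‖ :=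
    real_inner_le_norm _ _
  have hx2 : ⟪x, ys - u⟫ = ⟪ys, x⟫ - ⟪x, u⟫ := by
    rw [inner_sub_right, real_inner_comm x ys]
  have hnr : ‖gradient ψbd u - x‖ = ‖x - gradient ψbd u‖ := norm_sub_rev _ _
  set r := ‖x - gradient ψbd u‖ with hr
  set d := ‖ys - u‖ with hd
  have hrd : ⟪ys, x⟫ - ψbd ys - (⟪x, u⟫ - ψbd u) ≤ r * d - β / 2 * d ^ 2 := by
    have := hst
    rw [hinner, hx2] at this
    linarith [hcs]
  have hq : r * d - β / 2 * d ^ 2 ≤ 1 / (2 * β) * r ^ 2 := by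
    have h0 : 1 / (2 * β) * r ^ 2 - (r * d - β / 2 * d ^ 2) = (r - β * d) ^ 2 / (2 * β) := by
      field_simp; ring
    linarith [div_nonneg (sq_nonneg (r - β * d)) (by positivity : (0:ℝ) ≤ 2 * β)]
  have hBb : 1 / (2 * β) * r ^ 2 ≤ B / (2 * β ^ 2) * r ^ 2 := by
    have hr2 : (0:ℝ) ≤ r ^ 2 := sq_nonneg r
    have : 1 / (2 * β) ≤ B / (2 * β ^ 2) := by
      rw [div_le_div_iff₀ (by positivity) (by positivity)]
      nlinarith
    nlinarith
  rw [hnr]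
  linarith
/-- Intermediate lower bound (23)–(24) in the proof of Theorem 2: the
regularized objective `M` satisfies
`M ≥ Σₙ αₙ ∫ ψₙ‡ dPₙ + τ ∫ [Σₙ αₙ ψ̄ₙ‡(y) − ‖y‖²/2]₊ dP̂
  + Σₙ αₙ (λ − B/(2β²)) ∫ ‖∇ψ̄ₙ‡(∇ψₙ†(x)) − x‖² dPₙ`. -/
theorem theorem2_intermediate_lower_bound {D N : ℕ}
    (P : Fin N → Measure (EuclideanSpace ℝ (Fin D)))
    [∀ n, IsProbabilityMeasure (P n)]
    (α : Fin N → ℝ) (hα : ∀ n, 0 < α n) (hαsum : ∑ n, α n = 1)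
    -- candidate potentials ψₙ† and ψ̄ₙ‡ with conjugates ψₙ‡
    (β B : ℝ) (hβ : 0 < β) (hβB : β ≤ B)
    (ψdag ψbd ψd : Fin N → EuclideanSpace ℝ (Fin D) → ℝ)
    (hψdag_conv : ∀ n, ConvexOn ℝ Set.univ (ψdag n))
    (hψdag_diff : ∀ n, Differentiable ℝ (ψdag n))
    (hψbd_conv : ∀ n, ConvexOn ℝ Set.univ (ψbd n))
    (hψbd_diff : ∀ n, Differentiable ℝ (ψbd n))
    (hψbd_sconv : ∀ n, ConvexOn ℝ Set.univ (fun y => ψbd n y - β / 2 * ‖y‖ ^ 2))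
    (hψbd_smooth : ∀ n x y, ‖gradient (ψbd n) x - gradient (ψbd n) y‖ ≤ B * ‖x - y‖)
    (hψd_diff : ∀ n, Differentiable ℝ (ψd n))
    (hψd_conj : ∀ n x, IsLUB (Set.range fun y => ⟪y, x⟫ - ψbd n y) (ψd n x))
    (hψd_lip : ∀ n x y, ‖gradient (ψd n) x - gradient (ψd n) y‖ ≤ (1 / β) * ‖x - y‖)
    (hinv1 : ∀ n x, gradient (ψbd n) (gradient (ψd n) x) = x)
    (hinv2 : ∀ n y, gradient (ψd n) (gradient (ψbd n) y) = y)
    -- regularization parameters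
    (lam : ℝ) (hlam : 0 < lam)
    (τ : ℝ) (hτ : 1 ≤ τ)
    (Phat : Measure (EuclideanSpace ℝ (Fin D))) [IsProbabilityMeasure Phat]
    -- integrability of the stated integrals
    (hintM1 : ∀ n, Integrable
      (fun x => ⟪x, gradient (ψdag n) x⟫ - ψbd n (gradient (ψdag n) x)) (P n))
    (hintM2 : Integrable (fun y => max (∑ n, α n * ψbd n y - ‖y‖ ^ 2 / 2) 0) Phat)
    (hintM3 : ∀ n, Integrable
      (fun x => ‖gradient (ψbd n) (gradient (ψdag n) x) - x‖ ^ 2) (P n))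
    (hint_d : ∀ n, Integrable (ψd n) (P n))
    -- the regularized objective
    (M : ℝ)
    (hM : M = (∑ n, α n * ∫ x, (⟪x, gradient (ψdag n) x⟫
          - ψbd n (gradient (ψdag n) x)) ∂(P n))
      + τ * ∫ y, max (∑ n, α n * ψbd n y - ‖y‖ ^ 2 / 2) 0 ∂Phat
      + lam * ∑ n, α n * ∫ x, ‖gradient (ψbd n) (gradient (ψdag n) x) - x‖ ^ 2 ∂(P n)) :
    M ≥ (∑ n, α n * ∫ x, ψd n x ∂(P n))
      + τ * ∫ y, max (∑ n, α n * ψbd n y - ‖y‖ ^ 2 / 2) 0 ∂Phat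
      + ∑ n, α n * (lam - B / (2 * β ^ 2)) *
          ∫ x, ‖gradient (ψbd n) (gradient (ψdag n) x) - x‖ ^ 2 ∂(P n) := by
  set c : ℝ := B / (2 * β ^ 2) with hc
  set Dn : Fin N → ℝ := fun n => ∫ x, ψd n x ∂(P n) with hDn
  set In : Fin N → ℝ := fun n => ∫ x, (⟪x, gradient (ψdag n) x⟫
      - ψbd n (gradient (ψdag n) x)) ∂(P n) with hIn
  set Rn : Fin N → ℝ := fun n =>
      ∫ x, ‖gradient (ψbd n) (gradient (ψdag n) x) - x‖ ^ 2 ∂(P n) with hRn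
  have hn : ∀ n, Dn n - c * Rn n ≤ In n := by
    intro n
    have hpt : ∀ x, ψd n x - c * ‖gradient (ψbd n) (gradient (ψdag n) x) - x‖ ^ 2
        ≤ ⟪x, gradient (ψdag n) x⟫ - ψbd n (gradient (ψdag n) x) := fun x =>
      aux_key hβ hβB (hψbd_conv n) (hψbd_diff n) (hψbd_sconv n) (hψd_conj n)
        (hinv1 n) x (gradient (ψdag n) x)
    have hint : Integrable
        (fun x => ψd n x - c * ‖gradient (ψbd n) (gradient (ψdag n) x) - x‖ ^ 2) (P n) :=
      (hint_d n).sub ((hintM3 n).const_mul c)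
    have hmono := integral_mono hint (hintM1 n) hpt
    rwa [integral_sub (hint_d n) ((hintM3 n).const_mul c), integral_const_mul] at hmono
  rw [ge_iff_le, hM]
  have hmain : ∑ n, α n * Dn n + ∑ n, α n * (lam - c) * Rn n
      ≤ ∑ n, α n * In n + lam * ∑ n, α n * Rn n := by
    rw [Finset.mul_sum, ← Finset.sum_add_distrib, ← Finset.sum_add_distrib]
    apply Finset.sum_le_sum
    intro n _
    nlinarith [mul_le_mul_of_nonneg_left (hn n) (hα n).le]
  linarith
end
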